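/- (Class-Agnostic Prevalence Estimator) Let D ⊆ ℝ^m be measurable with |P_D - N_D| > 0, let q ∈ [0,1], and let r_1, ..., r_s be independent and identically distributed random variables with common density Q(r;q) = q·P(r) + (1-q)·N(r). Define Q̃_D = (1/s)·Σ_{i=1}^s 1[r_i ∈ D] and q̃ = (Q̃_D - N_D)/(P_D - N_D). Then E[q̃] = q (the estimator is unbiased), and E[(q̃ - q)²] = Q_D(1-Q_D)/(s·(P_D - N_D)²), which tends to 0 as s → ∞, so q̃ converges to q in mean square. -/

import Mathlib

open MeasureTheory ProbabilityTheory Set Filter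

/-- Class-Agnostic Prevalence Estimator: Let `D` be measurable with
`|P_D - N_D| > 0`, `q ∈ [0,1]`, and `r_1, ..., r_s` iid with common density
`Q(r;q) = q·P(r) + (1-q)·N(r)`. With `Q̃_D = (1/s)·Σ_i 1[r_i ∈ D]` and
`q̃ = (Q̃_D - N_D)/(P_D - N_D)`, the estimator is unbiased, `E[q̃] = q`, and
`E[(q̃-q)²] = Q_D(1-Q_D)/(s(P_D-N_D)²) → 0` as `s → ∞`, so `q̃` converges to `q` in mean
square. -/
theorem stmt_16 {m : ℕ} {Ω : Type*} [MeasurableSpace Ω]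
    (μ : Measure Ω) [IsProbabilityMeasure μ]
    (N P : (Fin m → ℝ) → ℝ)
    (hNmeas : Measurable N) (hPmeas : Measurable P)
    (hNnonneg : ∀ r, 0 ≤ N r) (hPnonneg : ∀ r, 0 ≤ P r)
    (hNint : ∫ r, N r = 1) (hPint : ∫ r, P r = 1)
    (q : ℝ) (hq : q ∈ Set.Icc (0 : ℝ) 1)
    (D : Set (Fin m → ℝ)) (hD : MeasurableSet D)
    (hPN : |(∫ r in D, P r) - ∫ r in D, N r| > 0)
    (s : ℕ) (hs : 0 < s)
    (R : Fin s → Ω → (Fin m → ℝ))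
    (hRmeas : ∀ i, Measurable (R i))
    (hdist : ∀ i, μ.map (R i)
      = volume.withDensity (fun r => ENNReal.ofReal (q * P r + (1 - q) * N r)))
    (hindep : iIndepFun R μ) :
    (∫ ω, ((∑ i, D.indicator (fun _ => (1 : ℝ)) (R i ω)) / s - ∫ r in D, N r)
        / ((∫ r in D, P r) - ∫ r in D, N r) ∂μ = q)
    ∧ (∫ ω, (((∑ i, D.indicator (fun _ => (1 : ℝ)) (R i ω)) / s - ∫ r in D, N r)
          / ((∫ r in D, P r) - ∫ r in D, N r) - q) ^ 2 ∂μ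
        = (q * (∫ r in D, P r) + (1 - q) * ∫ r in D, N r)
            * (1 - (q * (∫ r in D, P r) + (1 - q) * ∫ r in D, N r))
            / (s * ((∫ r in D, P r) - ∫ r in D, N r) ^ 2))
    ∧ Tendsto (fun n : ℕ =>
        (q * (∫ r in D, P r) + (1 - q) * ∫ r in D, N r)
          * (1 - (q * (∫ r in D, P r) + (1 - q) * ∫ r in D, N r))
          / (n * ((∫ r in D, P r) - ∫ r in D, N r) ^ 2)) atTop (nhds 0) := by
  obtain ⟨hq0, hq1⟩ := hq
  set nd := ∫ r in D, N r with hnd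
  set pd := ∫ r in D, P r with hpd
  set c := pd - nd with hc
  set p := q * pd + (1 - q) * nd with hp
  have hc0 : c ≠ 0 := by
    intro h; rw [h] at hPN; simp at hPN
  have hs0 : (s : ℝ) ≠ 0 := Nat.cast_ne_zero.mpr hs.ne'
  have hNI : Integrable N := by
    by_contra h; rw [integral_undef h] at hNint; norm_num at hNint
  have hPI : Integrable P := by
    by_contra h; rw [integral_undef h] at hPint; norm_num at hPint
  set f : (Fin m → ℝ) → ℝ := fun r => q * P r + (1 - q) * N r with hf
  have hfI : Integrable f := (hPI.const_mul q).add (hNI.const_mul (1 - q))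
  have hfnn : ∀ r, 0 ≤ f r := fun r =>
    add_nonneg (mul_nonneg hq0 (hPnonneg r)) (mul_nonneg (by linarith) (hNnonneg r))
  have hfD : ∫ r in D, f r = p := by
    rw [hp, hpd, hnd, hf]
    rw [integral_add (hPI.integrableOn.const_mul q) (hNI.integrableOn.const_mul (1 - q)),
        integral_const_mul, integral_const_mul]
  have hp0 : 0 ≤ p := hfD ▸ setIntegral_nonneg hD (fun r _ => hfnn r)
  set A : Fin s → Set Ω := fun i => R i ⁻¹' D with hA
  have hAmeas : ∀ i, MeasurableSet (A i) := fun i => (hRmeas i) hD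
  have hmA : ∀ i, μ (A i) = ENNReal.ofReal p := by
    intro i
    show μ (R i ⁻¹' D) = _
    rw [← Measure.map_apply (hRmeas i) hD, hdist i, withDensity_apply _ hD,
        ← ofReal_integral_eq_lintegral_ofReal hfI.integrableOn
          (Filter.Eventually.of_forall fun r => hfnn r), hfD]
  set X : Fin s → Ω → ℝ := fun i ω => D.indicator (fun _ => (1 : ℝ)) (R i ω) with hX
  have hXind : ∀ i, X i = (A i).indicator 1 := by
    intro i; funext ω
    by_cases h : R i ω ∈ D <;>
      simp [hX, hA, Set.indicator_apply, h]
  have hXint : ∀ i, Integrable (X i) μ := fun i =>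
    (hXind i) ▸ (integrable_const (1 : ℝ)).indicator (hAmeas i)
  have hEX : ∀ i, ∫ ω, X i ω ∂μ = p := by
    intro i
    rw [hXind i, integral_indicator_one (hAmeas i), measureReal_def, hmA i, ENNReal.toReal_ofReal hp0]
  have hXmul : ∀ i j, (fun ω => X i ω * X j ω) = (A i ∩ A j).indicator 1 := by
    intro i j; funext ω
    by_cases hi : ω ∈ A i <;> by_cases hj : ω ∈ A j <;>
      simp [hXind, Set.indicator_apply, hi, hj]
  have hXXint : ∀ i j, Integrable (fun ω => X i ω * X j ω) μ := fun i j =>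
    (hXmul i j) ▸ (integrable_const (1 : ℝ)).indicator ((hAmeas i).inter (hAmeas j))
  have hEXX : ∀ i j, ∫ ω, X i ω * X j ω ∂μ = if i = j then p else p * p := by
    intro i j
    rw [hXmul i j, integral_indicator_one ((hAmeas i).inter (hAmeas j))]
    by_cases hij : i = j
    · subst hij
      simp [Set.inter_self, measureReal_def, hmA i, ENNReal.toReal_ofReal hp0]
    · have h2 : μ (A i ∩ A j) = μ (A i) * μ (A j) :=
        (hindep.indepFun hij).measure_inter_preimage_eq_mul D D hD hD
      rw [measureReal_def, h2, hmA i, hmA j, ← ENNReal.ofReal_mul hp0,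
        ENNReal.toReal_ofReal (mul_nonneg hp0 hp0)]
      simp [hij]
  set S : Ω → ℝ := fun ω => ∑ i, X i ω with hS
  have hSint : Integrable S μ := integrable_finset_sum _ fun i _ => hXint i
  have I1 : ∫ ω, S ω ∂μ = s * p := by
    rw [hS]
    rw [integral_finset_sum _ fun i _ => hXint i]
    simp [hEX, Finset.card_univ]
  have hSSint : Integrable (fun ω => S ω * S ω) μ := by
    have : (fun ω => S ω * S ω) = fun ω => ∑ i, ∑ j, X i ω * X j ω := by
      funext ω; rw [hS]; rw [Finset.sum_mul_sum]
    rw [this]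
    exact integrable_finset_sum _ fun i _ => integrable_finset_sum _ fun j _ => hXXint i j
  have I2 : ∫ ω, S ω * S ω ∂μ = s * ((p - p * p) + s * (p * p)) := by
    have h1 : (fun ω => S ω * S ω) = fun ω => ∑ i, ∑ j, X i ω * X j ω := by
      funext ω; rw [hS]; rw [Finset.sum_mul_sum]
    rw [h1, integral_finset_sum _ fun i _ => integrable_finset_sum _ fun j _ => hXXint i j]
    have h2 : ∀ i : Fin s, ∫ ω, ∑ j, X i ω * X j ω ∂μ = (p - p * p) + s * (p * p) := by
      intro i
      rw [integral_finset_sum _ fun j _ => hXXint i j]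
      have h3 : ∀ j : Fin s, ∫ ω, X i ω * X j ω ∂μ
          = (if i = j then p - p * p else 0) + p * p := by
        intro j; rw [hEXX i j]; split <;> ring
      rw [Finset.sum_congr rfl fun j _ => h3 j, Finset.sum_add_distrib, Finset.sum_ite_eq,
        Finset.sum_const, Finset.card_univ]
      simp [nsmul_eq_mul]
    rw [Finset.sum_congr rfl fun i _ => h2 i, Finset.sum_const, Finset.card_univ]
    simp only [Fintype.card_fin, nsmul_eq_mul]
  have hpc : nd + q * c = p := by rw [hp, hc]; ring
  have hgoal1 : ∫ ω, ((∑ i, D.indicator (fun _ => (1 : ℝ)) (R i ω)) / s - nd) / c ∂μ = q := by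
    have heq : (fun ω => ((∑ i, D.indicator (fun _ => (1 : ℝ)) (R i ω)) / s - nd) / c)
        = fun ω => (1 / (s * c)) * S ω + (-(nd / c)) := by
      funext ω
      show ((∑ i, X i ω) / s - nd) / c = _
      rw [hS]; field_simp; ring
    rw [heq, integral_add (hSint.const_mul _) (integrable_const _), integral_const_mul, I1,
      integral_const]
    simp only [probReal_univ, measure_univ, ENNReal.toReal_one, smul_eq_mul, mul_one]
    rw [← hpc]; field_simp; ring
  refine ⟨hgoal1, ?_, ?_⟩
  · have heq : (fun ω => (((∑ i, D.indicator (fun _ => (1 : ℝ)) (R i ω)) / s - nd) / c - q) ^ 2)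
        = fun ω => (1 / (s * c))^2 * (S ω * S ω)
            + (-(2 * (s * p) / (s * c)^2)) * S ω + ((s * p)^2 / (s * c)^2) := by
      funext ω
      show (((∑ i, X i ω) / s - nd) / c - q) ^ 2 = _
      rw [hS, ← hpc]; field_simp; ring
    have hintA : Integrable (fun ω => (1 / ((s : ℝ) * c))^2 * (S ω * S ω)) μ :=
      hSSint.const_mul _
    have hintB : Integrable (fun ω => (-(2 * ((s : ℝ) * p) / ((s : ℝ) * c)^2)) * S ω) μ :=
      hSint.const_mul _
    have hintAB : Integrable (fun ω => (1 / ((s : ℝ) * c))^2 * (S ω * S ω)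
        + (-(2 * ((s : ℝ) * p) / ((s : ℝ) * c)^2)) * S ω) μ := hintA.add hintB
    rw [heq, integral_add hintAB (integrable_const _),
      integral_add hintA hintB, integral_const_mul,
      integral_const_mul, I1, I2, integral_const]
    simp only [probReal_univ, measure_univ, ENNReal.toReal_one, smul_eq_mul, mul_one]
    field_simp
    ring
  · have heq : (fun n : ℕ => p * (1 - p) / (n * c ^ 2)) = fun n : ℕ => (p * (1 - p) / c ^ 2) / n := by
      funext n; rw [div_div]; ring_nf
    rw [heq]
    exact tendsto_const_div_atTop_nhds_zero_nat _
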